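/- For every real a ≥ 20, ∫_a^∞ √(log(2y))/y² dy ≤ log(a)/a. -/

import Mathlib

open MeasureTheory Filter Real Topology

theorem tail_integral_le (a : ℝ) (ha : 20 ≤ a) :
    (∫ y in Set.Ioi a, Real.sqrt (Real.log (2 * y)) / y ^ 2) ≤ Real.log a / a := by
  have ha0 : (0:ℝ) < a := by linarith
  set L := Real.log (2 * a) with hLdef
  have hexp3 : Real.exp 3 ≤ 40 := by
    have h1 : Real.exp 3 = Real.exp 1 ^ (3:ℕ) := by
      rw [← Real.exp_nat_mul]; norm_num
    have h2 : Real.exp 1 ≤ 2.72 := le_of_lt (lt_trans Real.exp_one_lt_d9 (by norm_num))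
    have h3 : Real.exp 1 ^ (3:ℕ) ≤ 2.72 ^ (3:ℕ) :=
      pow_le_pow_left₀ (Real.exp_pos 1).le h2 3
    rw [h1]; nlinarith
  have hL3 : (3:ℝ) ≤ L := by
    have h40 : (3:ℝ) ≤ Real.log 40 := (Real.le_log_iff_exp_le (by norm_num)).mpr hexp3
    have : Real.log 40 ≤ L := Real.log_le_log (by norm_num) (by linarith)
    linarith
  set s := Real.sqrt L with hsdef
  have hs_sq : s ^ 2 = L := Real.sq_sqrt (by linarith)
  have hs_nonneg : 0 ≤ s := Real.sqrt_nonneg _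
  have hs : (1.73:ℝ) ≤ s := by nlinarith
  set K := 2 * s with hKdef
  have hK : (0:ℝ) < K := by rw [hKdef]; linarith
  set g : ℝ → ℝ := fun y => (Real.log (2 * y) + L) / (K * y ^ 2) with hgdef
  set G : ℝ → ℝ := fun y => -(Real.log (2 * y) + 1 + L) / (K * y) with hGdef
  have hderiv : ∀ x ∈ Set.Ici a, HasDerivAt G (g x) x := by
    intro x hx
    have hxa : a ≤ x := hx
    have hx0 : (0:ℝ) < x := lt_of_lt_of_le ha0 hxa
    have h2x : (2:ℝ) * x ≠ 0 := by positivity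
    have h2y : HasDerivAt (fun y : ℝ => 2 * y) 2 x := by
      simpa using (hasDerivAt_id x).const_mul 2
    have hlog : HasDerivAt (fun y => Real.log (2 * y)) ((2*x)⁻¹ * 2) x :=
      (Real.hasDerivAt_log h2x).comp x h2y
    have hnum : HasDerivAt (fun y => -(Real.log (2 * y) + 1 + L)) (-((2*x)⁻¹ * 2)) x :=
      ((hlog.add_const 1).add_const L).neg
    have hden : HasDerivAt (fun y => K * y) K x := by
      simpa using (hasDerivAt_id x).const_mul K
    have hd := hnum.div hden (by positivity)
    refine hd.congr_deriv ?_
    rw [hgdef]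
    field_simp
    ring
  have hg0 : ∀ x ∈ Set.Ioi a, 0 ≤ g x := by
    intro x hx
    have hxa : a < x := hx
    have hx0 : (0:ℝ) < x := lt_trans ha0 hxa
    have hlog0 : 0 ≤ Real.log (2 * x) := Real.log_nonneg (by linarith)
    exact div_nonneg (by linarith) (by positivity)
  have hGtend : Tendsto G atTop (𝓝 0) := by
    have h1 : Tendsto (fun y : ℝ => Real.log y / y) atTop (𝓝 0) :=
      Real.isLittleO_log_id_atTop.tendsto_div_nhds_zero
    have h2 : Tendsto (fun y : ℝ => y⁻¹) atTop (𝓝 0) := tendsto_inv_atTop_zero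
    have h3 : Tendsto
        (fun y : ℝ => (-(1/K)) * (Real.log 2 * y⁻¹ + Real.log y / y + (1+L) * y⁻¹)) atTop
        (𝓝 ((-(1/K)) * (Real.log 2 * 0 + 0 + (1+L) * 0))) :=
      (((h2.const_mul _).add h1).add (h2.const_mul _)).const_mul _
    simp only [mul_zero, add_zero, zero_add] at h3
    apply h3.congr'
    filter_upwards [eventually_gt_atTop (0:ℝ)] with y hy
    rw [hGdef]
    simp only
    rw [Real.log_mul two_ne_zero (ne_of_gt hy)]
    field_simp
    ring
  have hInt_g : IntegrableOn g (Set.Ioi a) :=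
    integrableOn_Ioi_deriv_of_nonneg' hderiv hg0 hGtend
  have hval : ∫ y in Set.Ioi a, g y = 0 - G a :=
    integral_Ioi_of_hasDerivAt_of_tendsto' hderiv hInt_g hGtend
  have hfg : ∀ y ∈ Set.Ioi a, Real.sqrt (Real.log (2 * y)) / y ^ 2 ≤ g y := by
    intro y hy
    have hya : a < y := hy
    have hy0 : (0:ℝ) < y := lt_trans ha0 hya
    have hLy : L ≤ Real.log (2 * y) := Real.log_le_log (by linarith) (by linarith)
    have hx0 : 0 ≤ Real.log (2 * y) := by linarith
    have hsq := Real.sq_sqrt hx0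
    have hsn := Real.sqrt_nonneg (Real.log (2 * y))
    have key : Real.sqrt (Real.log (2 * y)) ≤ (Real.log (2 * y) + L) / K := by
      rw [le_div_iff₀ hK]
      nlinarith [sq_nonneg (Real.sqrt (Real.log (2 * y)) - s)]
    show Real.sqrt (Real.log (2*y)) / y^2 ≤ (Real.log (2*y) + L) / (K * y^2)
    have heq : (Real.log (2*y) + L) / (K * y^2) = ((Real.log (2*y) + L) / K) / y^2 := by
      field_simp
    rw [heq]
    exact div_le_div_of_nonneg_right key (by positivity) |>.trans_eq rfl
  have hmeas : AEStronglyMeasurable (fun y => Real.sqrt (Real.log (2*y)) / y^2)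
      (volume.restrict (Set.Ioi a)) := by
    have m1 : Measurable fun y : ℝ => Real.sqrt (Real.log (2*y)) :=
      Real.continuous_sqrt.measurable.comp (Real.measurable_log.comp (measurable_const.mul measurable_id))
    have m2 : Measurable fun y : ℝ => y ^ 2 := measurable_id.pow_const 2
    exact (m1.div m2).aestronglyMeasurable
  have hInt_f : IntegrableOn (fun y => Real.sqrt (Real.log (2*y)) / y^2) (Set.Ioi a) := by
    apply Integrable.mono hInt_g hmeas
    filter_upwards [ae_restrict_mem measurableSet_Ioi] with y hy
    rw [Real.norm_eq_abs, Real.norm_eq_abs, abs_of_nonneg (by positivity),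
      abs_of_nonneg (hg0 y hy)]
    exact hfg y hy
  have hGa : 0 - G a = (2*L+1)/(K*a) := by
    show 0 - (-(Real.log (2*a) + 1 + L) / (K*a)) = _
    rw [← hLdef]; ring
  have hloga : Real.log a = L - Real.log 2 := by
    rw [hLdef, Real.log_mul two_ne_zero (ne_of_gt ha0)]; ring
  have hlog2 : Real.log 2 < 0.6931471808 := Real.log_two_lt_d9
  have key2 : (2*L+1)/K ≤ Real.log a := by
    rw [div_le_iff₀ hK, hloga, ← hs_sq, hKdef]
    nlinarith
  calc (∫ y in Set.Ioi a, Real.sqrt (Real.log (2 * y)) / y ^ 2)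
      ≤ ∫ y in Set.Ioi a, g y :=
        setIntegral_mono_on hInt_f hInt_g measurableSet_Ioi hfg
    _ = 0 - G a := hval
    _ = (2*L+1)/K/a := by rw [hGa, div_div]
    _ ≤ Real.log a / a := by gcongr
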